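/- Fix a, b, c ∈ ℂ and d > 0, let S_t = [[a, t], [ct, b]] for t > 0, and set E_d = ⋃_{t ∈ (0,d)} W(S_t). Then the closure of E_d equals W(S_d). Moreover, if |c| ≠ 1, then E_d = int(W(S_d)) and a, b ∈ int(W(S_d)). -/

import Mathlib

/-- The numerical range of a `2 × 2` complex matrix. -/
noncomputable def numRange (M : Matrix (Fin 2) (Fin 2) ℂ) : Set ℂ :=
  {z | ∃ x : EuclideanSpace ℂ (Fin 2), ‖x‖ = 1 ∧
    z = inner (𝕜 := ℂ) x (Matrix.toEuclideanCLM (𝕜 := ℂ) M x)}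

namespace nr18
open Complex

theorem numRange_eq (M : Matrix (Fin 2) (Fin 2) ℂ) : numRange M =
    {z | ∃ u v : ℂ, Complex.normSq u + Complex.normSq v = 1 ∧
      z = (starRingEnd ℂ) u * (M 0 0 * u + M 0 1 * v) +
          (starRingEnd ℂ) v * (M 1 0 * u + M 1 1 * v)} := by
  ext z
  constructor
  · rintro ⟨x, hx, rfl⟩
    refine ⟨x 0, x 1, ?_, ?_⟩
    · have h := congrArg (· ^ 2) hx
      rw [EuclideanSpace.norm_eq] at h
      simp only [Fin.sum_univ_two, one_pow] at h
      rw [Real.sq_sqrt (by positivity)] at h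
      simpa [Complex.sq_norm] using h
    · rw [PiLp.inner_apply]
      have hi : ∀ i, (Matrix.toEuclideanCLM (𝕜 := ℂ) M x) i = M.mulVec x i := fun i => rfl
      simp only [hi, Fin.sum_univ_two, Matrix.mulVec, dotProduct, RCLike.inner_apply]
      ring
  · rintro ⟨u, v, huv, rfl⟩
    refine ⟨(WithLp.equiv 2 _).symm ![u, v], ?_, ?_⟩
    · rw [EuclideanSpace.norm_eq]
      simp only [Fin.sum_univ_two, WithLp.equiv_symm_apply, PiLp.toLp_apply, Matrix.cons_val_zero,
        Matrix.cons_val_one, Matrix.head_cons, ← Complex.sq_norm] at huv ⊢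
      rw [huv]
      exact Real.sqrt_one
    · rw [PiLp.inner_apply]
      have hi : ∀ i, (Matrix.toEuclideanCLM (𝕜 := ℂ) M (WithLp.toLp 2 ![u, v])) i
          = M.mulVec ![u, v] i := fun i => rfl
      simp only [hi, Fin.sum_univ_two, Matrix.mulVec, dotProduct,
        WithLp.equiv_symm_apply, PiLp.toLp_apply, Matrix.cons_val_zero, Matrix.cons_val_one, Matrix.head_cons,
        RCLike.inner_apply]
      ring

/-- The parametrizing map: `phi a b c t (τ, ζ) = (a+b)/2 + (a-b)/2·τ + (t/2)(ζ + c·conj ζ)`. -/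
noncomputable def phi (a b c : ℂ) (t : ℝ) (p : ℝ × ℂ) : ℂ :=
  (a+b)/2 + ((a-b)/2) * p.1 + ((t:ℂ)/2) * (p.2 + c * (starRingEnd ℂ) p.2)

noncomputable def nsq (p : ℝ × ℂ) : ℝ := p.1^2 + Complex.normSq p.2
noncomputable def binn (p q : ℝ × ℂ) : ℝ := p.1 * q.1 + (p.2.re * q.2.re + p.2.im * q.2.im)

def sph : Set (ℝ × ℂ) := {p | nsq p = 1}
def cball : Set (ℝ × ℂ) := {p | nsq p ≤ 1}
def obal : Set (ℝ × ℂ) := {p | nsq p < 1}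

theorem normSq_two : Complex.normSq (2 : ℂ) = 4 := by
  simp [Complex.normSq_apply]; norm_num

theorem conj_two : (starRingEnd ℂ) (2:ℂ) = 2 := map_ofNat _ 2

variable (a b c : ℂ) (t d : ℝ)

theorem numRange_param :
    numRange !![a, (t : ℂ); c * t, b] = phi a b c t '' sph := by
  rw [numRange_eq]
  have e00 : (!![a, (t:ℂ); c * t, b]) 0 0 = a := rfl
  have e01 : (!![a, (t:ℂ); c * t, b]) 0 1 = t := rfl
  have e10 : (!![a, (t:ℂ); c * t, b]) 1 0 = c*t := rfl
  have e11 : (!![a, (t:ℂ); c * t, b]) 1 1 = b := rfl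
  simp only [e00, e01, e10, e11]
  ext z
  simp only [Set.mem_setOf_eq]
  constructor
  · rintro ⟨u, v, huv, rfl⟩
    refine ⟨(Complex.normSq u - Complex.normSq v, 2 * ((starRingEnd ℂ) u * v)), ?_, ?_⟩
    · simp only [sph, nsq, Set.mem_setOf_eq, Complex.normSq_mul, Complex.normSq_conj, normSq_two]
      nlinarith [huv]
    · have hc : ((starRingEnd ℂ) u * u) + ((starRingEnd ℂ) v * v) = 1 := by
        rw [← Complex.normSq_eq_conj_mul_self, ← Complex.normSq_eq_conj_mul_self]
        exact_mod_cast congrArg (fun r : ℝ => (r : ℂ)) huv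
      simp only [phi, map_mul, Complex.conj_conj, conj_two]
      push_cast
      rw [Complex.normSq_eq_conj_mul_self, Complex.normSq_eq_conj_mul_self]
      linear_combination (-(a+b)/2) * hc
  · rintro ⟨⟨τ, ζ⟩, hp, rfl⟩
    simp only [sph, nsq, Set.mem_setOf_eq] at hp
    by_cases hz : ζ = 0
    · subst hz
      simp only [Complex.normSq_zero, add_zero] at hp
      have hfac : (τ - 1) * (τ + 1) = 0 := by nlinarith
      rcases mul_eq_zero.mp hfac with h1 | h1
      · have hτ1 : τ = 1 := by linarith
        refine ⟨1, 0, by simp, ?_⟩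
        simp only [phi, hτ1, map_zero]
        push_cast
        simp
        try ring
      · have hτ1 : τ = -1 := by linarith
        refine ⟨0, 1, by simp, ?_⟩
        simp only [phi, hτ1, map_zero]
        push_cast
        simp
        try ring
    · have hτ : τ^2 < 1 := by nlinarith [Complex.normSq_pos.mpr hz]
      set s : ℝ := (1+τ)/2 with hs
      have hs0 : 0 < s := by rw [hs]; nlinarith
      have h1τ : 1 + τ ≠ 0 := by nlinarith
      have hsr : (0:ℝ) < Real.sqrt s := Real.sqrt_pos.mpr hs0
      obtain ⟨u, hu⟩ : ∃ u : ℂ, u = ((Real.sqrt s : ℝ) : ℂ) := ⟨_, rfl⟩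
      have hsru : u ≠ 0 := by rw [hu]; exact_mod_cast hsr.ne'
      obtain ⟨v, hv⟩ : ∃ v : ℂ, v = ζ / (2 * u) := ⟨_, rfl⟩
      have hcu : (starRingEnd ℂ) u = u := by rw [hu]; exact Complex.conj_ofReal _
      have hnu : Complex.normSq u = s := by
        rw [hu, Complex.normSq_ofReal, Real.mul_self_sqrt hs0.le]
      have hnv : Complex.normSq v = 1 - s := by
        rw [hv, Complex.normSq_div, Complex.normSq_mul, normSq_two, hnu]
        have hζ : Complex.normSq ζ = 1 - τ^2 := by linarith
        rw [hζ, hs]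
        field_simp
        ring
      have h1 : (starRingEnd ℂ) u * u = (s : ℂ) := by
        rw [← Complex.normSq_eq_conj_mul_self, hnu]
      have h2 : 2 * ((starRingEnd ℂ) u * v) = ζ := by
        rw [hcu, hv]; field_simp
      have h3 : 2 * ((starRingEnd ℂ) v * u) = (starRingEnd ℂ) ζ := by
        rw [hv, map_div₀, map_mul, hcu, conj_two]
        field_simp
      have h4 : (starRingEnd ℂ) v * v = 1 - (s : ℂ) := by
        rw [← Complex.normSq_eq_conj_mul_self, hnv]
        push_cast
        ring
      have hss : ((s:ℝ) : ℂ) = (1 + (τ:ℂ))/2 := by rw [hs]; push_cast; ring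
      refine ⟨u, v, by rw [hnu, hnv]; ring, ?_⟩
      simp only [phi]
      linear_combination (-(a:ℂ)) * h1 + (-(t:ℂ)/2) * h2 + (-(c*(t:ℂ))/2) * h3 + (-b) * h4
        + (-(a-b)) * hss

theorem phi_scale (hd : d ≠ 0) (p : ℝ × ℂ) :
    phi a b c t p = phi a b c d (p.1, ((t/d : ℝ) : ℂ) * p.2) := by
  have hd' : (d : ℂ) ≠ 0 := by exact_mod_cast hd
  simp only [phi, map_mul, Complex.conj_ofReal]
  push_cast
  field_simp

noncomputable def Gmap (a b c : ℂ) (d : ℝ) : (ℝ × ℂ) →ₗ[ℝ] ℂ where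
  toFun p := ((a-b)/2) * p.1 + ((d:ℂ)/2) * (p.2 + c * (starRingEnd ℂ) p.2)
  map_add' p q := by
    simp only [Prod.fst_add, Prod.snd_add, map_add]; push_cast; ring
  map_smul' r p := by
    simp only [Prod.smul_fst, Prod.smul_snd, smul_eq_mul, RingHom.id_apply,
      Complex.real_smul, map_mul, Complex.conj_ofReal]
    push_cast; ring

theorem Gmap_apply (p : ℝ × ℂ) :
    Gmap a b c d p = ((a-b)/2) * p.1 + ((d:ℂ)/2) * (p.2 + c * (starRingEnd ℂ) p.2) := rfl

theorem phi_eq (p : ℝ × ℂ) : phi a b c d p = (a+b)/2 + Gmap a b c d p := by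
  rw [phi, Gmap_apply]; ring

theorem phi_add (p w : ℝ × ℂ) :
    phi a b c d (p + w) = phi a b c d p + Gmap a b c d w := by
  simp only [phi_eq, map_add]; ring

theorem exists_ker : ∃ k : ℝ × ℂ, k ≠ 0 ∧ Gmap a b c d k = 0 := by
  have h3 : Module.finrank ℝ (ℝ × ℂ) = 3 := by
    rw [Module.finrank_prod, Complex.finrank_real_complex, Module.finrank_self]
  have : ¬ Function.Injective (Gmap a b c d) := by
    intro hinj
    have := LinearMap.finrank_le_finrank_of_injective hinj
    rw [h3, Complex.finrank_real_complex] at this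
    omega
  rw [injective_iff_map_eq_zero] at this
  push_neg at this
  obtain ⟨k, hk0, hk⟩ := this
  exact ⟨k, hk, hk0⟩

theorem nsq_nonneg (p : ℝ × ℂ) : 0 ≤ nsq p := by
  have := Complex.normSq_nonneg p.2; have := sq_nonneg p.1; simp only [nsq]; linarith

theorem nsq_pos {k : ℝ × ℂ} (hk : k ≠ 0) : 0 < nsq k := by
  rcases (nsq_nonneg k).lt_or_eq with h | h
  · exact h
  · exfalso; apply hk
    have h' : k.1^2 + Complex.normSq k.2 = 0 := by simpa [nsq] using h.symm
    have h1 : k.1 ^ 2 = 0 := by nlinarith [Complex.normSq_nonneg k.2, sq_nonneg k.1]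
    have h2 : Complex.normSq k.2 = 0 := by nlinarith [Complex.normSq_nonneg k.2, sq_nonneg k.1]
    have hk1 : k.1 = 0 := by nlinarith
    have hk2 : k.2 = 0 := Complex.normSq_eq_zero.mp h2
    exact Prod.ext hk1 hk2

theorem nsq_add_smul (p k : ℝ × ℂ) (μ : ℝ) :
    nsq (p + μ • k) = nsq p + 2*μ*(binn p k) + μ^2 * nsq k := by
  simp only [nsq, binn, Complex.normSq_apply, Prod.fst_add, Prod.snd_add, Prod.smul_fst,
    Prod.smul_snd, smul_eq_mul, Complex.add_re, Complex.add_im, Complex.real_smul,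
    Complex.mul_re, Complex.mul_im, Complex.ofReal_re, Complex.ofReal_im]
  ring

theorem binn_smul_left (r : ℝ) (p q : ℝ × ℂ) : binn (r • p) q = r * binn p q := by
  simp only [binn, Prod.smul_fst, Prod.smul_snd, smul_eq_mul, Complex.real_smul,
    Complex.mul_re, Complex.mul_im, Complex.ofReal_re, Complex.ofReal_im]
  ring

theorem nsq_smul (r : ℝ) (p : ℝ × ℂ) : nsq (r • p) = r^2 * nsq p := by
  simp only [nsq, Prod.smul_fst, Prod.smul_snd, smul_eq_mul, Complex.real_smul,
    Complex.normSq_mul, Complex.normSq_ofReal]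
  ring

theorem exists_shift_to_sph {p k : ℝ × ℂ} (hk : k ≠ 0) (hp : nsq p ≤ 1) :
    ∃ μ : ℝ, nsq (p + μ • k) = 1 := by
  set A := nsq k with hA
  set B := binn p k with hB
  have hA0 : 0 < A := nsq_pos hk
  set f : ℝ → ℝ := fun μ => nsq p + 2*μ*B + μ^2 * A with hf
  have hcont : Continuous f := by continuity
  set M : ℝ := max 1 ((2*|B|+2)/A) with hM
  have hM1 : (1:ℝ) ≤ M := le_max_left _ _
  have hM0 : (0:ℝ) ≤ M := by linarith
  have hM2 : 2*|B|+2 ≤ A * M := by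
    rw [hM]
    calc 2*|B|+2 = A * ((2*|B|+2)/A) := by field_simp
    _ ≤ A * max 1 ((2*|B|+2)/A) := by
        apply mul_le_mul_of_nonneg_left (le_max_right _ _) hA0.le
  have hfM : 1 ≤ f M := by
    have h1 : f M = nsq p + 2*M*B + M^2*A := rfl
    nlinarith [nsq_nonneg p, le_abs_self B, neg_abs_le B, abs_nonneg B]
  have := intermediate_value_Icc hM0 hcont.continuousOn
  have h1 : (1:ℝ) ∈ Set.Icc (f 0) (f M) := by
    constructor
    · simpa [hf] using hp
    · exact hfM
  obtain ⟨μ, _, hμ⟩ := this h1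
  exact ⟨μ, by rw [nsq_add_smul]; exact hμ⟩

theorem image_cball_eq :
    phi a b c d '' cball = phi a b c d '' sph := by
  apply Set.Subset.antisymm
  · rintro z ⟨p, hp, rfl⟩
    obtain ⟨k, hk0, hkG⟩ := exists_ker a b c d
    obtain ⟨μ, hμ⟩ := exists_shift_to_sph hk0 hp
    refine ⟨p + μ • k, hμ, ?_⟩
    rw [phi_add, map_smul, hkG, smul_zero, add_zero]
  · exact Set.image_mono (fun p hp => le_of_eq hp)

theorem conj_continuous : Continuous fun z : ℂ => (starRingEnd ℂ) z := continuous_star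

theorem phi_continuous : Continuous (phi a b c d) := by
  unfold phi
  exact (continuous_const.add (continuous_const.mul
    (Complex.continuous_ofReal.comp continuous_fst))).add (continuous_const.mul
    (continuous_snd.add (continuous_const.mul (conj_continuous.comp continuous_snd))))

theorem nsq_continuous : Continuous nsq := by
  unfold nsq
  continuity

theorem isCompact_cball : IsCompact cball := by
  rw [Metric.isCompact_iff_isClosed_bounded]
  constructor
  · exact isClosed_le nsq_continuous continuous_const
  · rw [Metric.isBounded_iff_subset_closedBall (0 : ℝ × ℂ)]
    refine ⟨1, fun p hp => ?_⟩
    simp only [cball, nsq, Set.mem_setOf_eq] at hp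
    have h1 : |p.1| ≤ 1 := by
      rw [← Real.sqrt_one, ← Real.sqrt_sq_eq_abs]
      exact Real.sqrt_le_sqrt (by nlinarith [Complex.normSq_nonneg p.2])
    have h2 : ‖p.2‖ ≤ 1 := by
      rw [Complex.norm_def, ← Real.sqrt_one]
      exact Real.sqrt_le_sqrt (by nlinarith [sq_nonneg p.1])
    rw [Metric.mem_closedBall, Prod.dist_eq]
    have d1 : dist p.1 (0 : ℝ × ℂ).1 = |p.1| := by simp [Real.dist_eq]
    have d2 : dist p.2 (0 : ℝ × ℂ).2 = ‖p.2‖ := by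
      simp only [Prod.snd_zero, Complex.dist_eq, sub_zero]
    rw [d1, d2]
    exact max_le h1 h2

theorem isOpen_obal : IsOpen obal := isOpen_lt nsq_continuous continuous_const

theorem Tinj {c : ℂ} (habs : ‖c‖ ≠ 1) {z : ℂ} (h : z + c * (starRingEnd ℂ) z = 0) :
    z = 0 := by
  by_contra hz
  apply habs
  have h1 : z = -(c * (starRingEnd ℂ) z) := by linear_combination h
  have h2 : ‖z‖ = ‖c‖ * ‖z‖ := by
    conv_lhs => rw [h1]
    simp [map_mul]
  have hz0 : ‖z‖ ≠ 0 := by simpa using hz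
  field_simp at h2
  tauto

theorem denom_ne {c : ℂ} (habs : ‖c‖ ≠ 1) : (1 : ℂ) - c * (starRingEnd ℂ) c ≠ 0 := by
  rw [Complex.mul_conj]
  intro h
  apply habs
  have : (Complex.normSq c : ℂ) = 1 := by linear_combination -h
  have h2 : Complex.normSq c = 1 := by exact_mod_cast this
  rw [← Complex.sq_norm] at h2
  nlinarith [norm_nonneg c]

noncomputable def Tinv (c y : ℂ) : ℂ := (y - c * (starRingEnd ℂ) y) / (1 - c * (starRingEnd ℂ) c)

theorem Tinv_spec {c : ℂ} (habs : ‖c‖ ≠ 1) (y : ℂ) :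
    Tinv c y + c * (starRingEnd ℂ) (Tinv c y) = y := by
  have hne := denom_ne habs
  have hcc : (starRingEnd ℂ) ((1:ℂ) - c * (starRingEnd ℂ) c) = 1 - c * (starRingEnd ℂ) c := by
    rw [map_sub, map_one, map_mul, Complex.conj_conj]; ring
  simp only [Tinv, map_div₀, hcc, map_sub, map_mul, Complex.conj_conj]
  rw [← mul_div_assoc, ← add_div, div_eq_iff hne]
  ring

noncomputable def kc (a b c : ℂ) (d : ℝ) : ℝ × ℂ :=
  (1, ((-(2/d) : ℝ) : ℂ) * Tinv c ((a-b)/2))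

theorem kc_ne_zero : kc a b c d ≠ 0 := by
  intro h
  have := congrArg Prod.fst h
  simp [kc] at this

theorem Gmap_kc {c : ℂ} {d : ℝ} (habs : ‖c‖ ≠ 1) (hd : d ≠ 0) :
    Gmap a b c d (kc a b c d) = 0 := by
  have hspec := Tinv_spec habs ((a-b)/2)
  have hd' : (d : ℂ) ≠ 0 := by exact_mod_cast hd
  have h2d : ((d:ℂ)/2) * (2/(d:ℂ)) = 1 := by field_simp
  simp only [Gmap_apply, kc, map_mul, Complex.conj_ofReal]
  push_cast
  linear_combination (-(Tinv c ((a-b)/2) + c * (starRingEnd ℂ) (Tinv c ((a-b)/2)))) * h2d - hspec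

theorem mem_ker_eq {a b c : ℂ} {d : ℝ} (habs : ‖c‖ ≠ 1) (hd : d ≠ 0)
    {q : ℝ × ℂ} (hq : Gmap a b c d q = 0) : q = q.1 • kc a b c d := by
  have hk := Gmap_kc a b habs hd
  have h2 : Gmap a b c d (q - q.1 • kc a b c d) = 0 := by
    rw [map_sub, map_smul, hq, hk]
    simp
  set w := q.2 - q.1 • (kc a b c d).2 with hw
  have hw2 : (q - q.1 • kc a b c d).2 = w := rfl
  have hw1 : (q - q.1 • kc a b c d).1 = 0 := by
    simp [kc]
  have hd' : (d : ℂ) ≠ 0 := by exact_mod_cast hd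
  have h3 : w + c * (starRingEnd ℂ) w = 0 := by
    rw [Gmap_apply, hw1, hw2] at h2
    simp only [Complex.ofReal_zero, mul_zero, zero_add] at h2
    rcases mul_eq_zero.mp h2 with h | h
    · exact absurd h (by simpa using hd')
    · exact h
  have hw0 : w = 0 := Tinj habs h3
  have h4 : q.2 = q.1 • (kc a b c d).2 := by
    have := sub_eq_zero.mp (hw ▸ hw0 : q.2 - q.1 • (kc a b c d).2 = 0)
    exact this
  have h5 : q.1 = q.1 • (kc a b c d).1 := by simp [kc]
  exact Prod.ext h5 h4

theorem Gmap_surj {a b c : ℂ} {d : ℝ} (habs : ‖c‖ ≠ 1) (hd : d ≠ 0) :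
    Function.Surjective (Gmap a b c d) := by
  intro y
  refine ⟨(0, ((2/d : ℝ) : ℂ) * Tinv c y), ?_⟩
  have hspec := Tinv_spec habs y
  have hd' : (d : ℂ) ≠ 0 := by exact_mod_cast hd
  have h2d : ((d:ℂ)/2) * (2/(d:ℂ)) = 1 := by field_simp
  simp only [Gmap_apply, map_mul, Complex.conj_ofReal]
  push_cast
  linear_combination (Tinv c y + c * (starRingEnd ℂ) (Tinv c y)) * h2d + hspec

theorem isOpenMap_phi {a b c : ℂ} {d : ℝ} (habs : ‖c‖ ≠ 1) (hd : d ≠ 0) :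
    IsOpenMap (phi a b c d) := by
  have hG : IsOpenMap (Gmap a b c d) := by
    have hco : ⇑(LinearMap.toContinuousLinearMap (Gmap a b c d)) = ⇑(Gmap a b c d) := rfl
    have := ContinuousLinearMap.isOpenMap (LinearMap.toContinuousLinearMap (Gmap a b c d))
      (by rw [← hco] at *; exact fun y => (Gmap_surj habs hd y).imp (fun x hx => hx))
    rwa [hco] at this
  have heq : phi a b c d = (fun z => (a+b)/2 + z) ∘ (Gmap a b c d) := by
    funext p
    simp [phi_eq, Function.comp]
  rw [heq]
  exact ((Homeomorph.addLeft ((a+b)/2)).isOpenMap).comp hG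

theorem phi_one_zero : phi a b c d ((1 : ℝ), (0 : ℂ)) = a := by
  simp only [phi, map_zero]
  push_cast
  simp
  try ring

theorem phi_negone_zero : phi a b c d ((-1 : ℝ), (0 : ℂ)) = b := by
  simp only [phi, map_zero]
  push_cast
  simp
  try ring

end nr18
set_option maxHeartbeats 1000000 in
theorem stmt_18 (a b c : ℂ) (d : ℝ) (hd : 0 < d)
    (S : ℝ → Matrix (Fin 2) (Fin 2) ℂ)
    (hS : ∀ t : ℝ, S t = !![a, (t : ℂ); c * t, b])
    (E : Set ℂ) (hE : E = ⋃ t ∈ Set.Ioo (0 : ℝ) d, numRange (S t)) :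
    closure E = numRange (S d) ∧
    (‖c‖ ≠ 1 →
      E = interior (numRange (S d)) ∧
      a ∈ interior (numRange (S d)) ∧ b ∈ interior (numRange (S d))) := by
  classical
  have hd0 : d ≠ 0 := ne_of_gt hd
  have hNR : ∀ t : ℝ, numRange (S t) = nr18.phi a b c t '' nr18.sph := fun t => by
    rw [hS t]; exact nr18.numRange_param a b c t
  have hEmem : ∀ t, t ∈ Set.Ioo (0:ℝ) d → ∀ p ∈ nr18.sph, nr18.phi a b c t p ∈ E := by
    intro t ht p hp
    rw [hE]
    exact Set.mem_biUnion ht (by rw [hNR t]; exact ⟨p, hp, rfl⟩)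
  have hone : ((1:ℝ), (0:ℂ)) ∈ nr18.sph := by simp [nr18.sph, nr18.nsq]
  have hnegone : ((-1:ℝ), (0:ℂ)) ∈ nr18.sph := by simp [nr18.sph, nr18.nsq]
  have haE : a ∈ E := by
    have := hEmem (d/2) ⟨by linarith, by linarith⟩ _ hone
    rwa [nr18.phi_one_zero] at this
  have hbE : b ∈ E := by
    have := hEmem (d/2) ⟨by linarith, by linarith⟩ _ hnegone
    rwa [nr18.phi_negone_zero] at this
  -- E is contained in the image of the closed ball
  have hEsub : E ⊆ nr18.phi a b c d '' nr18.cball := by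
    intro z hz
    rw [hE] at hz
    simp only [Set.mem_iUnion, exists_prop] at hz
    obtain ⟨t, ht, hzt⟩ := hz
    rw [hNR t] at hzt
    obtain ⟨p, hp, rfl⟩ := hzt
    refine ⟨(p.1, ((t/d : ℝ):ℂ) * p.2), ?_, (nr18.phi_scale a b c t d hd0 p).symm⟩
    have hp' : p.1^2 + Complex.normSq p.2 = 1 := hp
    simp only [nr18.cball, nr18.nsq, Set.mem_setOf_eq, Complex.normSq_mul,
      Complex.normSq_ofReal]
    have h2 : 0 < t/d := div_pos ht.1 hd
    have h3 : t/d ≤ 1 := (div_le_one hd).mpr ht.2.le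
    have h4 : t/d*(t/d) ≤ 1 := by nlinarith
    nlinarith [mul_nonneg (by linarith : (0:ℝ) ≤ 1 - t/d*(t/d)) (Complex.normSq_nonneg p.2)]
  -- points of the open ball with nonzero second coordinate are in E
  have hOB_E : ∀ q : ℝ × ℂ, nr18.nsq q < 1 → q.2 ≠ 0 → nr18.phi a b c d q ∈ E := by
    intro q hq hq2
    have hns : 0 < Complex.normSq q.2 := Complex.normSq_pos.mpr hq2
    have hq' : q.1^2 + Complex.normSq q.2 < 1 := hq
    have h1q : 0 < 1 - q.1^2 := by nlinarith
    set t := d * Real.sqrt (Complex.normSq q.2) / Real.sqrt (1 - q.1^2) with hts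
    have hsr1 : 0 < Real.sqrt (1 - q.1^2) := Real.sqrt_pos.mpr h1q
    have hsr2 : 0 < Real.sqrt (Complex.normSq q.2) := Real.sqrt_pos.mpr hns
    have ht0 : 0 < t := div_pos (mul_pos hd hsr2) hsr1
    have ht0' : t ≠ 0 := ne_of_gt ht0
    have htd : t < d := by
      rw [hts, div_lt_iff₀ hsr1]
      have hlt : Real.sqrt (Complex.normSq q.2) < Real.sqrt (1 - q.1^2) :=
        Real.sqrt_lt_sqrt (Complex.normSq_nonneg _) (by nlinarith)
      nlinarith
    have ht2 : t^2 * (1 - q.1^2) = d^2 * Complex.normSq q.2 := by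
      rw [hts, div_pow, mul_pow, Real.sq_sqrt (Complex.normSq_nonneg _), Real.sq_sqrt h1q.le]
      field_simp
    have hsph : ((q.1 : ℝ), ((d/t : ℝ):ℂ) * q.2) ∈ nr18.sph := by
      have : (d/t)*(d/t) * Complex.normSq q.2 = 1 - q.1^2 := by
        have ht2' : t^2 ≠ 0 := pow_ne_zero 2 ht0'
        field_simp
        nlinarith [ht2]
      simp only [nr18.sph, nr18.nsq, Set.mem_setOf_eq, Complex.normSq_mul,
        Complex.normSq_ofReal]
      linarith [this]
    have h2 := hEmem t ⟨ht0, htd⟩ _ hsph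
    rw [nr18.phi_scale a b c t d hd0] at h2
    have htC : (t:ℂ) ≠ 0 := by exact_mod_cast ht0'
    have hdC : (d:ℂ) ≠ 0 := by exact_mod_cast hd0
    have h3 : (((q.1 : ℝ), ((d/t : ℝ):ℂ) * q.2).1, ((t/d:ℝ):ℂ) * ((q.1 : ℝ), ((d/t : ℝ):ℂ) * q.2).2) = q := by
      apply Prod.ext
      · rfl
      · show ((t/d:ℝ):ℂ) * (((d/t:ℝ):ℂ) * q.2) = q.2
        push_cast
        field_simp
    rw [h3] at h2
    exact h2
  -- distance formula
  have hdist : ∀ p q : ℝ × ℂ,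
      dist (nr18.phi a b c d p) (nr18.phi a b c d q) = ‖nr18.Gmap a b c d (p - q)‖ := by
    intro p q
    have h1 : nr18.phi a b c d p = nr18.phi a b c d q + nr18.Gmap a b c d (p - q) := by
      rw [← nr18.phi_add]
      congr 1
      abel
    rw [h1, Complex.dist_eq]
    simp
  -- Part 1 : closure E = numRange (S d)
  have hP1 : closure E = numRange (S d) := by
    rw [hNR d, ← nr18.image_cball_eq]
    apply Set.Subset.antisymm
    · exact closure_minimal hEsub
        ((nr18.isCompact_cball.image (nr18.phi_continuous a b c d)).isClosed)
    · rintro z ⟨p, hp, rfl⟩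
      have hple : nr18.nsq p ≤ 1 := hp
      by_cases hp2 : p.2 = 0
      · have hpp : p = (p.1, (0:ℂ)) := Prod.ext rfl hp2
        have hsq : p.1^2 ≤ 1 := by
          have : nr18.nsq p = p.1^2 + Complex.normSq p.2 := rfl
          rw [this, hp2] at hple
          simpa using hple
        rcases eq_or_lt_of_le hsq with heq | hlt
        · -- p = (±1, 0) : the point is a or b, already in E
          apply subset_closure
          have hfac : (p.1 - 1) * (p.1 + 1) = 0 := by nlinarith
          rcases mul_eq_zero.mp hfac with h1 | h1
          · have : p.1 = 1 := by linarith
            rw [hpp, this, nr18.phi_one_zero]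
            exact haE
          · have : p.1 = -1 := by linarith
            rw [hpp, this, nr18.phi_negone_zero]
            exact hbE
        · -- interior-segment points : approximate with (p.1, σ)
          rw [Metric.mem_closure_iff]
          intro ε hε
          set C2 := ‖nr18.Gmap a b c d ((0:ℝ),(1:ℂ))‖ with hC2
          have hC20 : 0 ≤ C2 := norm_nonneg _
          set σ := min (ε/(C2+1)) (min 1 (1 - p.1^2)) / 2 with hσ
          have hσ0 : 0 < σ := by
            apply div_pos _ (by norm_num)
            apply lt_min (div_pos hε (by linarith))
            exact lt_min one_pos (by linarith)
          have hσ1 : σ ≤ 1/2 := by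
            rw [hσ]
            have : min (ε/(C2+1)) (min 1 (1 - p.1^2)) ≤ 1 :=
              le_trans (min_le_right _ _) (min_le_left _ _)
            linarith
          have hσ2 : σ ≤ (1 - p.1^2)/2 := by
            rw [hσ]
            have : min (ε/(C2+1)) (min 1 (1 - p.1^2)) ≤ 1 - p.1^2 :=
              le_trans (min_le_right _ _) (min_le_right _ _)
            linarith
          have hσ3 : σ ≤ (ε/(C2+1))/2 := by
            rw [hσ]
            have := min_le_left (ε/(C2+1)) (min 1 (1 - p.1^2))
            linarith
          refine ⟨nr18.phi a b c d (p.1, ((σ:ℝ):ℂ)), ?_, ?_⟩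
          · apply hOB_E
            · have : nr18.nsq (p.1, ((σ:ℝ):ℂ)) = p.1^2 + σ^2 := by
                simp [nr18.nsq, Complex.normSq_ofReal]; ring
              rw [this]
              nlinarith
            · simpa using hσ0.ne'
          · rw [hdist]
            have hpq : p - ((p.1 : ℝ), ((σ:ℝ):ℂ)) = (-σ) • ((0:ℝ),(1:ℂ)) := by
              rw [hpp]
              apply Prod.ext
              · simp
              · simp [Complex.real_smul]
            rw [hpq, map_smul, norm_smul, Real.norm_eq_abs, abs_neg, abs_of_pos hσ0, ← hC2]
            calc σ * C2 ≤ ((ε/(C2+1))/2) * C2 := by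
                  apply mul_le_mul_of_nonneg_right hσ3 hC20
            _ < ε := by
                  rw [div_mul_eq_mul_div, div_lt_iff₀ (by norm_num : (0:ℝ) < 2)]
                  have h1 : ε / (C2+1) * C2 < ε := by
                    rw [div_mul_eq_mul_div, div_lt_iff₀ (by linarith)]
                    nlinarith
                  nlinarith [h1]
      · -- p.2 ≠ 0 : approximate with r • p
        rw [Metric.mem_closure_iff]
        intro ε hε
        set CG := ‖nr18.Gmap a b c d p‖ with hCG
        have hCG0 : 0 ≤ CG := norm_nonneg _
        set r := max (1/2) (1 - ε/(CG+1)) with hr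
        have hr1 : r < 1 := by
          rw [hr]
          apply max_lt (by norm_num)
          have : 0 < ε/(CG+1) := div_pos hε (by linarith)
          linarith
        have hr0 : 0 < r := lt_of_lt_of_le (by norm_num) (le_max_left _ _)
        have hrε : 1 - r ≤ ε/(CG+1) := by
          have := le_max_right (1/2) (1 - ε/(CG+1))
          rw [hr]
          linarith
        refine ⟨nr18.phi a b c d (r • p), ?_, ?_⟩
        · apply hOB_E
          · rw [nr18.nsq_smul]
            nlinarith [nr18.nsq_nonneg p]
          · have : (r • p).2 = (r:ℂ) * p.2 := by simp [Complex.real_smul]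
            rw [this]
            exact mul_ne_zero (by exact_mod_cast hr0.ne') hp2
        · rw [hdist]
          have hpq : p - r • p = (1 - r) • p := by
            apply Prod.ext
            · simp; ring
            · simp [Complex.real_smul]; ring
          rw [hpq, map_smul, norm_smul, Real.norm_eq_abs, abs_of_pos (by linarith : 0 < 1 - r),
            ← hCG]
          calc (1-r) * CG ≤ (ε/(CG+1)) * CG := mul_le_mul_of_nonneg_right hrε hCG0
          _ < ε := by
              rw [div_mul_eq_mul_div, div_lt_iff₀ (by linarith)]
              nlinarith
  refine ⟨hP1, fun habs => ?_⟩
  -- Part 2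
  have hkc0 := nr18.kc_ne_zero a b c d
  have hkcG := nr18.Gmap_kc a b habs hd0
  have hK : 0 < nr18.nsq (nr18.kc a b c d) := nr18.nsq_pos hkc0
  set K := nr18.nsq (nr18.kc a b c d) with hKdef
  have hsub : nr18.phi a b c d '' nr18.obal ⊆ numRange (S d) := by
    rw [hNR d, ← nr18.image_cball_eq]
    exact Set.image_mono (fun p hp => (le_of_lt (hp : nr18.nsq p < 1) : nr18.nsq p ≤ 1))
  have hOpen : IsOpen (nr18.phi a b c d '' nr18.obal) :=
    (nr18.isOpenMap_phi habs hd0) _ nr18.isOpen_obal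
  have hIntSub : nr18.phi a b c d '' nr18.obal ⊆ interior (numRange (S d)) :=
    interior_maximal hsub hOpen
  -- a and b are in the image of the open ball
  have hmemO : ∀ τ0 : ℝ, τ0^2 = 1 →
      nr18.phi a b c d (τ0, (0:ℂ)) ∈ nr18.phi a b c d '' nr18.obal := by
    intro τ0 hτ0
    set m0 : ℝ := min 1 (1/K) with hm0
    have hm00 : 0 < m0 := lt_min one_pos (by positivity)
    have hm01 : m0 ≤ 1 := min_le_left _ _
    have hm0K : m0 * K ≤ 1 := by
      have h := min_le_right 1 (1/K)
      have h2 : m0 * K ≤ (1/K) * K := mul_le_mul_of_nonneg_right h hK.le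
      rwa [one_div, inv_mul_cancel₀ (ne_of_gt hK)] at h2
    refine ⟨(τ0, (0:ℂ)) + (-τ0*m0) • nr18.kc a b c d, ?_, ?_⟩
    · have hnsq0 : nr18.nsq (τ0, (0:ℂ)) = 1 := by
        simp [nr18.nsq, hτ0]
      have hbinn0 : nr18.binn (τ0, (0:ℂ)) (nr18.kc a b c d) = τ0 := by
        simp [nr18.binn, nr18.kc]
      have : nr18.nsq ((τ0, (0:ℂ)) + (-τ0*m0) • nr18.kc a b c d)
          = 1 + 2*(-τ0*m0)*τ0 + (-τ0*m0)^2 * K := by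
        rw [nr18.nsq_add_smul, hnsq0, hbinn0]
      rw [nr18.obal, Set.mem_setOf_eq, this]
      have h1 : (-τ0*m0)^2 * K = m0^2 * K := by
        have : (-τ0*m0)^2 = τ0^2 * m0^2 := by ring
        rw [this, hτ0]; ring
      rw [h1]
      have h2 : 2*(-τ0*m0)*τ0 = -2*m0 := by
        have : 2*(-τ0*m0)*τ0 = -2*m0*τ0^2 := by ring
        rw [this, hτ0]; ring
      rw [h2]
      nlinarith [hm00, hm01, hm0K, hK]
    · rw [nr18.phi_add, map_smul, hkcG, smul_zero, add_zero]
  have haInt : a ∈ interior (numRange (S d)) := by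
    apply hIntSub
    have := hmemO 1 (by norm_num)
    rwa [nr18.phi_one_zero] at this
  have hbInt : b ∈ interior (numRange (S d)) := by
    apply hIntSub
    have := hmemO (-1) (by norm_num)
    rwa [nr18.phi_negone_zero] at this
  refine ⟨?_, haInt, hbInt⟩
  -- E = interior (numRange (S d))
  apply Set.Subset.antisymm
  · -- E ⊆ interior
    intro z hz
    rw [hE] at hz
    simp only [Set.mem_iUnion, exists_prop] at hz
    obtain ⟨t, ht, hzt⟩ := hz
    rw [hNR t] at hzt
    obtain ⟨p, hp, rfl⟩ := hzt
    by_cases hp2 : p.2 = 0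
    · have hpp : p = (p.1, (0:ℂ)) := Prod.ext rfl hp2
      have hsq : p.1^2 = 1 := by
        have hp' : p.1^2 + Complex.normSq p.2 = 1 := hp
        rw [hp2] at hp'
        simpa using hp'
      have hphi : nr18.phi a b c t p = nr18.phi a b c d (p.1, (0:ℂ)) := by
        rw [hpp]
        simp [nr18.phi]
      rw [hphi]
      exact hIntSub (hmemO p.1 hsq)
    · rw [nr18.phi_scale a b c t d hd0 p]
      apply hIntSub
      refine ⟨_, ?_, rfl⟩
      have hp' : p.1^2 + Complex.normSq p.2 = 1 := hp
      have hns : 0 < Complex.normSq p.2 := Complex.normSq_pos.mpr hp2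
      have h2 : 0 < t/d := div_pos ht.1 hd
      have h3 : t/d < 1 := (div_lt_one hd).mpr ht.2
      show (p.1 : ℝ)^2 + Complex.normSq (((t/d : ℝ):ℂ) * p.2) < 1
      rw [Complex.normSq_mul, Complex.normSq_ofReal]
      have h4 : t/d*(t/d) < 1 := by nlinarith
      have h5 : t/d*(t/d)*Complex.normSq p.2 < Complex.normSq p.2 := by nlinarith
      linarith
  · -- interior ⊆ E
    intro z hz
    have hz1 : z ∈ nr18.phi a b c d '' nr18.cball := by
      have := interior_subset hz
      rwa [hNR d, ← nr18.image_cball_eq] at this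
    have hOB : z ∈ nr18.phi a b c d '' nr18.obal := by
      by_contra hno
      obtain ⟨v, hv, hzv⟩ := hz1
      have hall : ∀ u, nr18.nsq u ≤ 1 → nr18.phi a b c d u = z → nr18.nsq u = 1 := by
        intro u h1 h2
        by_contra hne
        exact hno ⟨u, lt_of_le_of_ne h1 hne, h2⟩
      have hv1 : nr18.nsq v = 1 := hall v hv hzv
      set co := nr18.binn v (nr18.kc a b c d) / K with hco
      have hGv' : nr18.phi a b c d (v + (-co) • nr18.kc a b c d) = z := by
        rw [nr18.phi_add, map_smul, hkcG, smul_zero, add_zero, hzv]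
      have hnv' : nr18.nsq (v + (-co) • nr18.kc a b c d) = 1 - co^2 * K := by
        rw [nr18.nsq_add_smul, hv1]
        have hbK : nr18.binn v (nr18.kc a b c d) = co * K := by
          rw [hco]; field_simp
        rw [hbK]; ring
      have hco0 : co = 0 := by
        have h1 : nr18.nsq (v + (-co) • nr18.kc a b c d) = 1 := by
          apply hall _ _ hGv'
          rw [hnv']
          nlinarith [sq_nonneg co]
        rw [hnv'] at h1
        have : co^2 * K = 0 := by linarith
        have h2 : co^2 = 0 := by
          rcases mul_eq_zero.mp this with h | h
          · exact h
          · exact absurd h (ne_of_gt hK)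
        exact pow_eq_zero_iff (by norm_num) |>.mp h2
      have hbinn : nr18.binn v (nr18.kc a b c d) = 0 := by
        have : nr18.binn v (nr18.kc a b c d) = co * K := by rw [hco]; field_simp
        rw [this, hco0]; ring
      set Gv := nr18.Gmap a b c d v with hGvdef
      have hGv0 : Gv ≠ 0 := by
        intro h0
        apply hno
        refine ⟨0, ?_, ?_⟩
        · show nr18.nsq (0 : ℝ × ℂ) < 1
          simp [nr18.nsq]
        · rw [← hzv, nr18.phi_eq, nr18.phi_eq, map_zero, ← hGvdef, h0]
      obtain ⟨ρ, hρ0, hball⟩ := Metric.mem_nhds_iff.mp (mem_interior_iff_mem_nhds.mp hz)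
      set εr := ρ / (2 * ‖Gv‖) with hεr
      have hnGv : 0 < ‖Gv‖ := norm_pos_iff.mpr hGv0
      have hεr0 : 0 < εr := div_pos hρ0 (by linarith)
      have hwball : z + εr • Gv ∈ Metric.ball z ρ := by
        rw [Metric.mem_ball, dist_eq_norm]
        have : z + εr • Gv - z = εr • Gv := by abel
        rw [this, norm_smul, Real.norm_eq_abs, abs_of_pos hεr0, hεr]
        rw [div_mul_eq_mul_div, div_lt_iff₀ (by linarith)]
        nlinarith
      have hwmem : z + εr • Gv ∈ nr18.phi a b c d '' nr18.cball := by
        have := hball hwball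
        rwa [hNR d, ← nr18.image_cball_eq] at this
      obtain ⟨u, hu, huw⟩ := hwmem
      have h1 : nr18.phi a b c d ((1+εr) • v) = z + εr • Gv := by
        rw [nr18.phi_eq, map_smul, ← hGvdef, ← hzv, nr18.phi_eq, ← hGvdef]
        simp only [Complex.real_smul]
        push_cast
        ring
      have hGu : nr18.Gmap a b c d (u - (1+εr) • v) = 0 := by
        have h2 : nr18.phi a b c d u = nr18.phi a b c d ((1+εr) • v) := by rw [huw, h1]
        rw [nr18.phi_eq, nr18.phi_eq] at h2
        have h3 : nr18.Gmap a b c d u = nr18.Gmap a b c d ((1+εr) • v) := by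
          exact add_left_cancel h2
        rw [map_sub, h3, sub_self]
      have hker_eq := nr18.mem_ker_eq habs hd0 hGu
      set r := (u - (1+εr) • v).1 with hrdef
      have hu_eq : u = (1+εr) • v + r • nr18.kc a b c d := by
        rw [← hker_eq]
        abel
      have hnsqu : nr18.nsq u = (1+εr)^2 + r^2 * K := by
        rw [hu_eq, nr18.nsq_add_smul, nr18.nsq_smul, nr18.binn_smul_left, hbinn, hv1]
        ring
      have : nr18.nsq u ≤ 1 := hu
      rw [hnsqu] at this
      nlinarith [sq_nonneg r, hεr0, hK]
    obtain ⟨q, hq, rfl⟩ := hOB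
    by_cases hq2 : q.2 = 0
    · by_cases hab : a = b
      · have hphiq : nr18.phi a b c d q = a := by
          have hqq : q = (q.1, (0:ℂ)) := Prod.ext rfl hq2
          rw [hqq, hab]
          simp [nr18.phi]
        rw [hphiq]
        exact haE
      · have hδ : (a - b)/2 ≠ 0 := by
          intro h
          apply hab
          have : a - b = 0 := by linear_combination 2*h
          linear_combination this
        have hζk : (nr18.kc a b c d).2 ≠ 0 := by
          simp only [nr18.kc]
          intro h
          rcases mul_eq_zero.mp h with h1 | h1
          · have : -(2/d) = 0 := by exact_mod_cast h1
            have : (2:ℝ)/d ≠ 0 := div_ne_zero (by norm_num) hd0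
            simp at *
            tauto
          · apply hδ
            have := nr18.Tinv_spec habs ((a-b)/2)
            rw [h1] at this
            simpa using this.symm
        set B2 := nr18.binn q (nr18.kc a b c d) with hB2
        set μ := (1 - nr18.nsq q) / (2*|B2| + K + 1) with hμ
        have hden : 0 < 2*|B2| + K + 1 := by positivity
        have hμ0 : 0 < μ := by
          have hqlt : nr18.nsq q < 1 := hq
          exact div_pos (by linarith) hden
        have hμ1 : μ ≤ 1 := by
          rw [hμ, div_le_one hden]
          have := nr18.nsq_nonneg q
          have := abs_nonneg B2
          linarith
        have hμd : μ * (2*|B2| + K + 1) = 1 - nr18.nsq q := by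
          rw [hμ]; field_simp
        have hq' : nr18.nsq (q + μ • nr18.kc a b c d) < 1 := by
          rw [nr18.nsq_add_smul]
          have h1 : 2*μ*(nr18.binn q (nr18.kc a b c d)) ≤ 2*μ*|B2| := by
            rw [← hB2]
            have : B2 ≤ |B2| := le_abs_self B2
            nlinarith
          have hsq : μ^2 ≤ μ := by nlinarith
          have h2 : μ^2 * K ≤ μ * K := mul_le_mul_of_nonneg_right hsq hK.le
          nlinarith
        have hq2' : (q + μ • nr18.kc a b c d).2 ≠ 0 := by
          have : (q + μ • nr18.kc a b c d).2 = q.2 + (μ:ℂ) * (nr18.kc a b c d).2 := by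
            simp [Complex.real_smul]
          rw [this, hq2, zero_add]
          exact mul_ne_zero (by exact_mod_cast hμ0.ne') hζk
        have hphiq : nr18.phi a b c d (q + μ • nr18.kc a b c d) = nr18.phi a b c d q := by
          rw [nr18.phi_add, map_smul, hkcG, smul_zero, add_zero]
        rw [← hphiq]
        exact hOB_E _ hq' hq2'
    · exact hOB_E q hq hq2
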